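/- Under the stated assumptions, the primal and dual optimal values coincide and are finite, i.e. v(P) = v(D) ∈ ℝ, and the primal problem attains its infimum: there exists x̄ ∈ ℝ^n with f(x̄) + g(A x̄) = v(P). -/

import Mathlib

open scoped RealInnerProductSpace
noncomputable section

/-- `Euc k` is the Euclidean space `ℝ^k`. -/
abbrev Euc (k : ℕ) := EuclideanSpace ℝ (Fin k)

/-- `f` is proper: nowhere `-∞` and somewhere finite. -/
def IsProperFn {k : ℕ} (f : Euc k → EReal) : Prop :=
  (∀ x, f x ≠ ⊥) ∧ ∃ x, f x ≠ ⊤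

/-- Convexity of an extended-real-valued function. -/
def IsConvexFn {k : ℕ} (f : Euc k → EReal) : Prop :=
  ∀ x y : Euc k, ∀ t : ℝ, 0 < t → t < 1 →
    f (t • x + (1 - t) • y) ≤ (t : EReal) * f x + ((1 - t : ℝ) : EReal) * f y

/-- `f` is proper, convex, lower semicontinuous with bounded effective domain. -/
def NiceFn {k : ℕ} (f : Euc k → EReal) : Prop :=
  IsProperFn f ∧ IsConvexFn f ∧ LowerSemicontinuous f ∧
    Bornology.IsBounded {x | f x ≠ ⊤}

/-- The Fenchel conjugate `f*(q) = sup_x {⟨q,x⟩ - f(x)}` (real-valued). -/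
noncomputable def conjFn {k : ℕ} (f : Euc k → EReal) (q : Euc k) : ℝ :=
  (⨆ x, ((⟪q, x⟫ : ℝ) : EReal) - f x).toReal

/-- The Fenchel conjugate as an extended real. -/
noncomputable def conjE {k : ℕ} (f : Euc k → EReal) (q : Euc k) : EReal :=
  ⨆ x, ((⟪q, x⟫ : ℝ) : EReal) - f x

/-- The smoothed conjugate `f_r*(q) = sup_x {⟨q,x⟩ - f(x) - (r/2)‖x‖²}`. -/
noncomputable def conjSm {k : ℕ} (f : Euc k → EReal) (r : ℝ) (q : Euc k) : ℝ :=
  (⨆ x, ((⟪q, x⟫ - r / 2 * ‖x‖ ^ 2 : ℝ) : EReal) - f x).toReal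

/-- The proximal objective `x ↦ f(x) + (r/2)‖u - x‖²`. -/
noncomputable def proxObj {k : ℕ} (f : Euc k → EReal) (r : ℝ) (u x : Euc k) : EReal :=
  f x + ((r / 2 * ‖u - x‖ ^ 2 : ℝ) : EReal)

/-- `D_f = sup {‖x‖²/2 : x ∈ dom f}`. -/
noncomputable def Dsup {k : ℕ} (f : Euc k → EReal) : ℝ :=
  sSup ((fun x : Euc k => ‖x‖ ^ 2 / 2) '' {x | f x ≠ ⊤})

/-- `x0` is the unique global minimizer of `h`. -/
def UniqMin {α : Type*} {β : Type*} [Preorder β] (h : α → β) (x0 : α) : Prop :=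
  (∀ x, h x0 ≤ h x) ∧ ∀ x, (∀ y, h x ≤ h y) → x = x0

/-- The dual objective `θ(p) = f*(A*p) + g*(-p)`. -/
noncomputable def theta {n m : ℕ} (f : Euc n → EReal) (g : Euc m → EReal)
    (A : Euc n →L[ℝ] Euc m) (p : Euc m) : ℝ :=
  conjFn f (ContinuousLinearMap.adjoint A p) + conjFn g (-p)

/-- The singly smoothed dual objective `θ_{ρ,μ}(p) = f_ρ*(A*p) + g_μ*(-p)`. -/
noncomputable def thetaSm {n m : ℕ} (f : Euc n → EReal) (g : Euc m → EReal)
    (A : Euc n →L[ℝ] Euc m) (r s : ℝ) (p : Euc m) : ℝ :=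
  conjSm f r (ContinuousLinearMap.adjoint A p) + conjSm g s (-p)

/-- The doubly smoothed dual objective `θ_{ρ,μ,κ}(p) = θ_{ρ,μ}(p) + (κ/2)‖p‖²`. -/
noncomputable def thetaSmK {n m : ℕ} (f : Euc n → EReal) (g : Euc m → EReal)
    (A : Euc n →L[ℝ] Euc m) (r s c : ℝ) (p : Euc m) : ℝ :=
  thetaSm f g A r s p + c / 2 * ‖p‖ ^ 2

/-- The optimal value of the primal problem `v(P) = inf {f(x) + g(Ax)}`. -/
noncomputable def vPrimal {n m : ℕ} (f : Euc n → EReal) (g : Euc m → EReal)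
    (A : Euc n →L[ℝ] Euc m) : EReal := ⨅ x, f x + g (A x)

/-- The optimal value of the dual problem `v(D) = -inf θ`. -/
noncomputable def vDual {n m : ℕ} (f : Euc n → EReal) (g : Euc m → EReal)
    (A : Euc n →L[ℝ] Euc m) : ℝ := -(⨅ p, theta f g A p)


section AuxiliaryLemmas

open Set

/-- A lower semicontinuous `EReal`-valued function attains its minimum on a
nonempty compact set. -/
lemma lsc_exists_min' {α : Type*} [TopologicalSpace α] {K : Set α} (hK : IsCompact K)
    (hne : K.Nonempty) {F : α → EReal} (hF : LowerSemicontinuous F) :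
    ∃ x ∈ K, ∀ y ∈ K, F x ≤ F y := by
  by_contra hcon
  push_neg at hcon
  have key : ∀ x ∈ K, ∃ c : EReal, (∃ y ∈ K, F y < c) ∧ c < F x := by
    intro x hx
    obtain ⟨y, hyK, hy⟩ := hcon x hx
    obtain ⟨c, hc1, hc2⟩ := exists_between hy
    exact ⟨c, ⟨y, hyK, hc1⟩, hc2⟩
  choose! c hc1 hc2 using key
  have hopen : ∀ x ∈ K, IsOpen (F ⁻¹' Ioi (c x)) := fun x _ =>
    lowerSemicontinuous_iff_isOpen_preimage.1 hF (c x)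
  have hcover : K ⊆ ⋃ x ∈ K, F ⁻¹' Ioi (c x) := fun x hx =>
    mem_biUnion hx (hc2 x hx)
  obtain ⟨b, hbK, hbfin, hbcover⟩ := hK.elim_finite_subcover_image hopen hcover
  have hbne : b.Nonempty := by
    obtain ⟨x, hx⟩ := hne
    obtain ⟨y, hy, _⟩ := mem_iUnion₂.1 (hbcover hx)
    exact ⟨y, hy⟩
  obtain ⟨x₀, hx₀b, hx₀min⟩ := Set.exists_min_image b c hbfin hbne
  obtain ⟨y₀, hy₀K, hy₀⟩ := hc1 x₀ (hbK hx₀b)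
  obtain ⟨x₁, hx₁b, hx₁⟩ := mem_iUnion₂.1 (hbcover hy₀K)
  have h1 : c x₁ < F y₀ := hx₁
  exact absurd (h1.trans (hy₀.trans_le (hx₀min x₁ hx₁b))) (lt_irrefl _)

/-- If `F` is jointly lsc and equals `⊤` off a compact slab `K` (in the first
variable), then the "partial-minimization epigraph" is closed. -/
lemma epi_closed' {α β : Type*} [TopologicalSpace α] [TopologicalSpace β]
    {K : Set α} (hK : IsCompact K)
    {F : α × β → EReal} (hF : LowerSemicontinuous F)
    (htop : ∀ x u, x ∉ K → F (x, u) = ⊤) :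
    IsClosed {w : β × ℝ | ∃ x, F (x, w.1) ≤ (w.2 : EReal)} := by
  rw [← isOpen_compl_iff]
  rw [isOpen_iff_mem_nhds]
  rintro ⟨u, t⟩ hw
  simp only [mem_compl_iff, mem_setOf_eq, not_exists, not_le] at hw
  have key : ∀ x ∈ K, ∃ c : EReal, (t : EReal) < c ∧ c < F (x, u) := fun x _ =>
    exists_between (hw x)
  choose! c hc1 hc2 using key
  have key2 : ∀ x ∈ K, ∃ (Ax : Set α) (Bx : Set β), IsOpen Ax ∧ IsOpen Bx ∧
      x ∈ Ax ∧ u ∈ Bx ∧ ∀ z ∈ Ax ×ˢ Bx, c x < F z := by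
    intro x hx
    have hopen : IsOpen (F ⁻¹' Ioi (c x)) :=
      lowerSemicontinuous_iff_isOpen_preimage.1 hF (c x)
    have hmem : (x, u) ∈ F ⁻¹' Ioi (c x) := hc2 x hx
    obtain ⟨Ax, Bx, hA, hB, hxA, huB, hsub⟩ := isOpen_prod_iff.1 hopen x u hmem
    exact ⟨Ax, Bx, hA, hB, hxA, huB, fun z hz => hsub hz⟩
  choose! Ax Bx hAopen hBopen hxA huB hAB using key2
  rcases K.eq_empty_or_nonempty with hKe | hKne
  · refine Filter.mem_of_superset Filter.univ_mem ?_
    rintro ⟨u', t'⟩ -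
    simp only [mem_compl_iff, mem_setOf_eq, not_exists, not_le]
    intro x
    rw [htop x u' (by simp [hKe])]
    exact EReal.coe_lt_top t'
  · obtain ⟨b, hbK, hbfin, hbcover⟩ := hK.elim_finite_subcover_image
      (fun x hx => hAopen x hx) (fun x hx => mem_biUnion hx (hxA x hx))
    have hbne : b.Nonempty := by
      obtain ⟨x, hx⟩ := hKne
      obtain ⟨y, hy, _⟩ := mem_iUnion₂.1 (hbcover hx)
      exact ⟨y, hy⟩
    obtain ⟨x₀, hx₀b, hx₀min⟩ := Set.exists_min_image b c hbfin hbne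
    have hWopen : IsOpen (⋂ x ∈ b, Bx x) := hbfin.isOpen_biInter (fun x hx => hBopen x (hbK hx))
    have hTopen : IsOpen {t' : ℝ | (t' : EReal) < c x₀} :=
      continuous_coe_real_ereal.isOpen_preimage _ isOpen_Iio
    refine Filter.mem_of_superset ((hWopen.prod hTopen).mem_nhds ?_) ?_
    · exact ⟨mem_biInter (fun x hx => huB x (hbK hx)), hc1 x₀ (hbK hx₀b)⟩
    · rintro ⟨u', t'⟩ ⟨hu', ht'⟩
      simp only [mem_compl_iff, mem_setOf_eq, not_exists, not_le]
      intro x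
      by_cases hxK : x ∈ K
      · obtain ⟨x₁, hx₁b, hx₁⟩ := mem_iUnion₂.1 (hbcover hxK)
        have hlt : c x₁ < F (x, u') :=
          hAB x₁ (hbK hx₁b) (x, u') ⟨hx₁, mem_iInter₂.1 hu' x₁ hx₁b⟩
        calc (t' : EReal) < c x₀ := ht'
          _ ≤ c x₁ := hx₀min x₁ hx₁b
          _ < F (x, u') := hlt
      · rw [htop x u' hxK]; exact EReal.coe_lt_top t'

lemma ereal_fin {a : EReal} (h1 : a ≠ ⊤) (h2 : a ≠ ⊥) : ∃ r : ℝ, a = (r : EReal) :=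
  ⟨a.toReal, (EReal.coe_toReal h1 h2).symm⟩

lemma ereal_ne_top_of_add_le_coe {a b : EReal} {t : ℝ} (hb : b ≠ ⊥) (h : a + b ≤ (t : EReal)) :
    a ≠ ⊤ := by
  intro ha
  rw [ha, EReal.top_add_of_ne_bot hb] at h
  exact absurd h (by simp)

lemma ereal_ne_top_of_add_le_coe' {a b : EReal} {t : ℝ} (ha : a ≠ ⊥) (h : a + b ≤ (t : EReal)) :
    b ≠ ⊤ := ereal_ne_top_of_add_le_coe ha (by rwa [add_comm])

lemma ereal_ne_top_of_le_coe {a : EReal} {c : ℝ} (h : a ≤ (c : EReal)) : a ≠ ⊤ := by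
  intro ha; rw [ha] at h; exact absurd h (by simp)

lemma ereal_ne_bot_of_coe_le {a : EReal} {c : ℝ} (h : (c : EReal) ≤ a) : a ≠ ⊥ := by
  intro ha; rw [ha] at h; exact absurd h (by simp)

lemma ereal_le_coe_of_forall_pos {a : EReal} {b : ℝ}
    (h : ∀ ε : ℝ, 0 < ε → a ≤ ((b + ε : ℝ) : EReal)) : a ≤ (b : EReal) := by
  induction a using EReal.rec with
  | bot => exact bot_le
  | coe r =>
    rw [EReal.coe_le_coe_iff]
    by_contra hc
    push_neg at hc
    have h2 := h ((r - b) / 2) (by linarith)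
    rw [EReal.coe_le_coe_iff] at h2
    linarith
  | top =>
    have h2 := h 1 one_pos
    exact absurd (top_le_iff.1 h2) (EReal.coe_ne_top _)

lemma conjE_lb {k : ℕ} {f : Euc k → EReal} {q x : Euc k} {a : ℝ} (ha : f x = (a : EReal)) :
    ((⟪q, x⟫ - a : ℝ) : EReal) ≤ conjE f q := by
  refine le_trans ?_ (le_iSup (fun x => ((⟪q, x⟫ : ℝ) : EReal) - f x) x)
  rw [ha, ← EReal.coe_sub]

lemma conjE_ub {k : ℕ} {f : Euc k → EReal} {q : Euc k} {c : ℝ}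
    (hfnb : ∀ x, f x ≠ ⊥)
    (h : ∀ (x : Euc k) (ax : ℝ), f x = (ax : EReal) → ⟪q, x⟫ - ax ≤ c) :
    conjE f q ≤ (c : EReal) := by
  rw [conjE]
  refine iSup_le fun x => ?_
  rcases eq_or_ne (f x) ⊤ with hT | hT
  · rw [hT, EReal.sub_top]; exact bot_le
  · obtain ⟨ax, hax⟩ := ereal_fin hT (hfnb x)
    rw [hax, ← EReal.coe_sub, EReal.coe_le_coe_iff]
    exact h x ax hax

end AuxiliaryLemmas

set_option maxHeartbeats 2000000

/-- Strong duality: `v(P) = v(D)` is finite and the primal problem attains its infimum. -/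
theorem stmt0 (n m : ℕ) (f : Euc n → EReal) (g : Euc m → EReal)
    (A : Euc n →L[ℝ] Euc m) (hf : NiceFn f) (hg : NiceFn g)
    (hfeas : ∃ x, f x ≠ ⊤ ∧ g (A x) ≠ ⊤) :
    ∃ r : ℝ,
      (⨅ x, f x + g (A x)) = (r : EReal) ∧
      -(⨅ p, conjE f (ContinuousLinearMap.adjoint A p) + conjE g (-p)) = (r : EReal) ∧
      ∃ xbar : Euc n, f xbar + g (A xbar) = (r : EReal) := by
  obtain ⟨⟨hfnb, -⟩, hfconv, hflsc, hfbdd⟩ := hf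
  obtain ⟨⟨hgnb, -⟩, hgconv, hglsc, hgbdd⟩ := hg
  obtain ⟨x₀, hx₀f, hx₀g⟩ := hfeas
  set K : Set (Euc n) := closure {x : Euc n | f x ≠ ⊤} with hKdef
  have hKcomp : IsCompact K := Metric.isCompact_of_isClosed_isBounded isClosed_closure hfbdd.closure
  have hfK : ∀ x, x ∉ K → f x = ⊤ := by
    intro x hx
    by_contra hne
    exact hx (subset_closure hne)
  have hlsc : LowerSemicontinuous fun x : Euc n => f x + g (A x) := by
    refine LowerSemicontinuous.add' hflsc (hglsc.comp A.continuous) ?_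
    intro x
    exact EReal.continuousAt_add (Or.inr (hgnb _)) (Or.inl (hfnb _))
  have hx₀K : x₀ ∈ K := subset_closure hx₀f
  obtain ⟨xb, hxbK, hxbmin⟩ := lsc_exists_min' hKcomp ⟨x₀, hx₀K⟩ hlsc
  have hmin : ∀ x, f xb + g (A xb) ≤ f x + g (A x) := by
    intro x
    by_cases hx : x ∈ K
    · exact hxbmin x hx
    · rw [hfK x hx, EReal.top_add_of_ne_bot (hgnb _)]
      exact le_top
  obtain ⟨a₀, ha₀⟩ := ereal_fin hx₀f (hfnb x₀)
  obtain ⟨b₀, hb₀⟩ := ereal_fin hx₀g (hgnb _)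
  have hxb_netop : f xb + g (A xb) ≠ ⊤ := by
    intro hT
    have h2 := hmin x₀
    rw [hT, ha₀, hb₀, ← EReal.coe_add, top_le_iff] at h2
    exact absurd h2 (EReal.coe_ne_top _)
  have hfxb_netop : f xb ≠ ⊤ := ereal_ne_top_of_add_le_coe (hgnb _)
    (le_of_eq (EReal.coe_toReal hxb_netop (by rw [Ne, EReal.add_eq_bot_iff]; push_neg; exact ⟨hfnb _, hgnb _⟩)).symm)
  have hgxb_netop : g (A xb) ≠ ⊤ := by
    intro hT
    exact hxb_netop (by rw [hT, EReal.add_top_of_ne_bot (hfnb _)])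
  obtain ⟨a1, ha1⟩ := ereal_fin hfxb_netop (hfnb xb)
  obtain ⟨b1, hb1⟩ := ereal_fin hgxb_netop (hgnb _)
  have hr : f xb + g (A xb) = ((a1 + b1 : ℝ) : EReal) := by rw [ha1, hb1, ← EReal.coe_add]
  set r : ℝ := a1 + b1 with hrdef
  have hinf : (⨅ x, f x + g (A x)) = (r : EReal) := by
    refine le_antisymm (le_trans (iInf_le _ xb) (le_of_eq hr)) (le_iInf fun x => ?_)
    rw [← hr]
    exact hmin x
  -- weak duality
  have hweak : ∀ p : Euc m, ((-r : ℝ) : EReal) ≤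
      conjE f (ContinuousLinearMap.adjoint A p) + conjE g (-p) := by
    intro p
    have h1 : ((⟪ContinuousLinearMap.adjoint A p, xb⟫ - a1 : ℝ) : EReal) ≤
        conjE f (ContinuousLinearMap.adjoint A p) := conjE_lb ha1
    have h2 : ((⟪-p, A xb⟫ - b1 : ℝ) : EReal) ≤ conjE g (-p) := conjE_lb hb1
    have hadj : ⟪ContinuousLinearMap.adjoint A p, xb⟫ = ⟪p, A xb⟫ :=
      ContinuousLinearMap.adjoint_inner_left A xb p
    have hng : ⟪-p, A xb⟫ = -⟪p, A xb⟫ := inner_neg_left p (A xb)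
    have heq : (-r : ℝ) = (⟪ContinuousLinearMap.adjoint A p, xb⟫ - a1) + (⟪-p, A xb⟫ - b1) := by
      rw [hadj, hng, hrdef]; ring
    calc ((-r : ℝ) : EReal)
        = ((⟪ContinuousLinearMap.adjoint A p, xb⟫ - a1 : ℝ) : EReal)
          + ((⟪-p, A xb⟫ - b1 : ℝ) : EReal) := by rw [← EReal.coe_add, heq]
      _ ≤ _ := add_le_add h1 h2
  -- strong duality
  have hstrong : ∀ ε : ℝ, 0 < ε →
      (⨅ p, conjE f (ContinuousLinearMap.adjoint A p) + conjE g (-p)) ≤ ((-r + ε : ℝ) : EReal) := by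
    intro ε hε
    -- the jointly lsc perturbed objective
    set Fj : Euc n × Euc m → EReal := fun z => f z.1 + g (A z.1 + z.2) with hFjdef
    have hFjlsc : LowerSemicontinuous Fj := by
      have h1 : LowerSemicontinuous (fun z : Euc n × Euc m => f z.1) :=
        hflsc.comp continuous_fst
      have h2 : LowerSemicontinuous (fun z : Euc n × Euc m => g (A z.1 + z.2)) :=
        hglsc.comp ((A.continuous.comp continuous_fst).add continuous_snd)
      exact h1.add' h2 (fun z => EReal.continuousAt_add (Or.inr (hgnb _)) (Or.inl (hfnb _)))
    have hFjtop : ∀ x u, x ∉ K → Fj (x, u) = ⊤ := by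
      intro x u hx
      simp only [hFjdef]
      rw [hfK x hx, EReal.top_add_of_ne_bot (hgnb _)]
    set E : Set (Euc m × ℝ) := {w | ∃ x, Fj (x, w.1) ≤ (w.2 : EReal)} with hEdef
    have hEclosed : IsClosed E := epi_closed' hKcomp hFjlsc hFjtop
    have hEconv : Convex ℝ E := by
      rintro ⟨u, t⟩ ⟨x, hx⟩ ⟨u', t'⟩ ⟨x', hx'⟩ s s' hs hs' hss
      simp only [hEdef, hFjdef, Set.mem_setOf_eq, Prod.fst_add, Prod.snd_add, Prod.smul_fst,
        Prod.smul_snd, smul_eq_mul] at hx hx' ⊢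
      rcases eq_or_lt_of_le hs with hs0 | hs0
      · have hs'1 : s' = 1 := by linarith
        refine ⟨x', ?_⟩
        rw [← hs0, hs'1]
        simpa using hx'
      rcases eq_or_lt_of_le hs' with hs'0 | hs'0
      · have hs1 : s = 1 := by linarith
        refine ⟨x, ?_⟩
        rw [← hs'0, hs1]
        simpa using hx
      have hs'eq : s' = 1 - s := by linarith
      subst hs'eq
      have hs1 : s < 1 := by linarith
      -- finiteness of the pieces
      have hfx_ne : f x ≠ ⊤ := ereal_ne_top_of_add_le_coe (hgnb _) hx
      have hgx_ne : g (A x + u) ≠ ⊤ := ereal_ne_top_of_add_le_coe' (hfnb _) hx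
      have hfx'_ne : f x' ≠ ⊤ := ereal_ne_top_of_add_le_coe (hgnb _) hx'
      have hgx'_ne : g (A x' + u') ≠ ⊤ := ereal_ne_top_of_add_le_coe' (hfnb _) hx'
      obtain ⟨ax, hax⟩ := ereal_fin hfx_ne (hfnb x)
      obtain ⟨bx, hbx⟩ := ereal_fin hgx_ne (hgnb _)
      obtain ⟨ax', hax'⟩ := ereal_fin hfx'_ne (hfnb x')
      obtain ⟨bx', hbx'⟩ := ereal_fin hgx'_ne (hgnb _)
      rw [hax, hbx, ← EReal.coe_add, EReal.coe_le_coe_iff] at hx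
      rw [hax', hbx', ← EReal.coe_add, EReal.coe_le_coe_iff] at hx'
      refine ⟨s • x + (1 - s) • x', ?_⟩
      have hptkey : A (s • x + (1 - s) • x') + (s • u + (1 - s) • u')
          = s • (A x + u) + (1 - s) • (A x' + u') := by
        rw [map_add, map_smul, map_smul]
        module
      have hcf := hfconv x x' s hs0 hs1
      have hcg := hgconv (A x + u) (A x' + u') s hs0 hs1
      calc f (s • x + (1 - s) • x') + g (A (s • x + (1 - s) • x') + (s • u + (1 - s) • u'))
          = f (s • x + (1 - s) • x') + g (s • (A x + u) + (1 - s) • (A x' + u')) := by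
            rw [hptkey]
        _ ≤ ((s : ℝ) : EReal) * f x + ((1 - s : ℝ) : EReal) * f x'
            + (((s : ℝ) : EReal) * g (A x + u) + ((1 - s : ℝ) : EReal) * g (A x' + u')) :=
            add_le_add hcf hcg
        _ = ((s * ax + (1 - s) * ax' + (s * bx + (1 - s) * bx') : ℝ) : EReal) := by
            rw [hax, hbx, hax', hbx']
            norm_cast
        _ ≤ ((s * t + (1 - s) * t' : ℝ) : EReal) := by
            rw [EReal.coe_le_coe_iff]
            nlinarith [mul_le_mul_of_nonneg_left hx hs0.le,
              mul_le_mul_of_nonneg_left hx' (by linarith : (0:ℝ) ≤ 1 - s)]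
    have hrE : ((0 : Euc m), r) ∈ E := by
      refine ⟨xb, ?_⟩
      simp only [hFjdef]
      rw [add_zero, hr]
    have hrnotE : ((0 : Euc m), r - ε) ∉ E := by
      rintro ⟨x, hx⟩
      simp only [hFjdef] at hx
      rw [add_zero] at hx
      have h2 : ((r : ℝ) : EReal) ≤ ((r - ε : ℝ) : EReal) := le_trans (by rw [← hr]; exact hmin x) hx
      rw [EReal.coe_le_coe_iff] at h2
      linarith
    obtain ⟨L, u₀, hsep, hlt⟩ := geometric_hahn_banach_closed_point hEconv hEclosed hrnotE
    set β : ℝ := L (0, 1) with hβdef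
    have hdecomp : ∀ (v : Euc m) (sc : ℝ), L (v, sc) = L (v, 0) + sc * β := by
      intro v sc
      have hvs : (v, sc) = (v, (0 : ℝ)) + sc • ((0 : Euc m), (1 : ℝ)) := by
        simp [Prod.ext_iff]
      rw [hvs, map_add, map_smul, smul_eq_mul, hβdef]
    have hβneg : β < 0 := by
      have h1 := hsep _ hrE
      have h2 := hlt
      rw [hdecomp] at h1 h2
      nlinarith
    set q : Euc m := (InnerProductSpace.toDual ℝ (Euc m)).symm
      (L.comp (ContinuousLinearMap.inl ℝ (Euc m) ℝ)) with hqdef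
    have hq : ∀ v : Euc m, ⟪q, v⟫ = L (v, 0) := by
      intro v
      rw [hqdef, InnerProductSpace.toDual_symm_apply]
      simp
    set p₀ : Euc m := β⁻¹ • q with hp₀def
    have hkey : ∀ (x : Euc n) (y : Euc m) (ax by_ : ℝ), f x = (ax : EReal) → g y = (by_ : EReal) →
        ⟪ContinuousLinearMap.adjoint A p₀, x⟫ - ax + (⟪-p₀, y⟫ - by_) ≤ -r + ε := by
      intro x y ax by_ hax hby
      have hmem : ((y - A x : Euc m), ax + by_) ∈ E := by
        refine ⟨x, ?_⟩
        simp only [hFjdef]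
        rw [show A x + (y - A x) = y from by abel, hax, hby, ← EReal.coe_add]
      have h1 := hsep _ hmem
      rw [hdecomp, ← hq] at h1
      have h2 := hlt
      rw [hdecomp] at h2
      have hq0 : L ((0 : Euc m), (0 : ℝ)) = 0 := by
        rw [← hq]
        simp
      rw [hq0, zero_add] at h2
      have e1 : ⟪ContinuousLinearMap.adjoint A p₀, x⟫ = β⁻¹ * ⟪q, A x⟫ := by
        rw [ContinuousLinearMap.adjoint_inner_left, hp₀def, real_inner_smul_left]
      have e2 : ⟪-p₀, y⟫ = -(β⁻¹ * ⟪q, y⟫) := by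
        rw [inner_neg_left, hp₀def, real_inner_smul_left]
      have e3 : ⟪q, y - A x⟫ = ⟪q, y⟫ - ⟪q, A x⟫ := inner_sub_right q y (A x)
      rw [e3] at h1
      rw [e1, e2]
      have hchain : ⟪q, y⟫ - ⟪q, A x⟫ + (ax + by_) * β < (r - ε) * β := by linarith
      have hββ : β⁻¹ * β = 1 := inv_mul_cancel₀ hβneg.ne
      by_contra hcon
      push_neg at hcon
      have hm := mul_lt_mul_of_neg_right hcon hβneg
      have hexp : (β⁻¹ * ⟪q, A x⟫ - ax + (-(β⁻¹ * ⟪q, y⟫) - by_)) * β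
          = (β⁻¹ * β) * ⟪q, A x⟫ - (β⁻¹ * β) * ⟪q, y⟫ - (ax + by_) * β := by ring
      rw [hexp, hββ] at hm
      linarith
    -- bounds on the two conjugates
    have hS₁ub : conjE f (ContinuousLinearMap.adjoint A p₀)
        ≤ ((-r + ε - (⟪-p₀, A xb⟫ - b1) : ℝ) : EReal) := by
      refine conjE_ub hfnb fun x ax hax => ?_
      have := hkey x (A xb) ax b1 hax hb1
      linarith
    have hS₂ub : conjE g (-p₀)
        ≤ ((-r + ε - (⟪ContinuousLinearMap.adjoint A p₀, xb⟫ - a1) : ℝ) : EReal) := by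
      refine conjE_ub hgnb fun y by_ hby => ?_
      have := hkey xb y a1 by_ ha1 hby
      linarith
    have hS₁lb := conjE_lb (q := ContinuousLinearMap.adjoint A p₀) ha1
    have hS₂lb := conjE_lb (q := -p₀) hb1
    obtain ⟨s₁, hs₁⟩ := ereal_fin (ereal_ne_top_of_le_coe hS₁ub) (ereal_ne_bot_of_coe_le hS₁lb)
    obtain ⟨s₂, hs₂⟩ := ereal_fin (ereal_ne_top_of_le_coe hS₂ub) (ereal_ne_bot_of_coe_le hS₂lb)
    have hsum : s₁ + s₂ ≤ -r + ε := by
      by_contra hcon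
      push_neg at hcon
      set δ : ℝ := (s₁ + s₂ - (-r + ε)) / 2 with hδdef
      have hδpos : 0 < δ := by rw [hδdef]; linarith
      have h1 : ((s₁ - δ : ℝ) : EReal) < conjE f (ContinuousLinearMap.adjoint A p₀) := by
        rw [hs₁, EReal.coe_lt_coe_iff]
        linarith
      have h2 : ((s₂ - δ : ℝ) : EReal) < conjE g (-p₀) := by
        rw [hs₂, EReal.coe_lt_coe_iff]
        linarith
      rw [conjE, lt_iSup_iff] at h1 h2
      obtain ⟨x, hx⟩ := h1
      obtain ⟨y, hy⟩ := h2
      have hfx_ne : f x ≠ ⊤ := by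
        intro hT
        rw [hT, EReal.sub_top] at hx
        exact absurd hx (by simp)
      have hgy_ne : g y ≠ ⊤ := by
        intro hT
        rw [hT, EReal.sub_top] at hy
        exact absurd hy (by simp)
      obtain ⟨ax, hax⟩ := ereal_fin hfx_ne (hfnb x)
      obtain ⟨by_, hby⟩ := ereal_fin hgy_ne (hgnb _)
      rw [hax, ← EReal.coe_sub, EReal.coe_lt_coe_iff] at hx
      rw [hby, ← EReal.coe_sub, EReal.coe_lt_coe_iff] at hy
      have := hkey x y ax by_ hax hby
      linarith
    calc (⨅ p, conjE f (ContinuousLinearMap.adjoint A p) + conjE g (-p))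
        ≤ conjE f (ContinuousLinearMap.adjoint A p₀) + conjE g (-p₀) := iInf_le _ p₀
      _ = ((s₁ + s₂ : ℝ) : EReal) := by rw [hs₁, hs₂, ← EReal.coe_add]
      _ ≤ ((-r + ε : ℝ) : EReal) := by rw [EReal.coe_le_coe_iff]; exact hsum
  have hinf2 : (⨅ p, conjE f (ContinuousLinearMap.adjoint A p) + conjE g (-p))
      = ((-r : ℝ) : EReal) := by
    refine le_antisymm (ereal_le_coe_of_forall_pos fun ε hε => hstrong ε hε) (le_iInf hweak)
  refine ⟨r, hinf, ?_, xb, hr⟩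
  rw [hinf2, ← EReal.coe_neg, neg_neg]
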